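/- In the vertex-cover reduction graph G' (each node v of a degree-3 graph G gets a heavy pendant neighbor of weight |V|+4|E|, each edge e=(u,v) is replaced by a diamond gadget with nodes U(e),D(e),L(e),R(e), gadgets chained in a fixed edge order between s and t), every weighted-optimal s–t secluded path avoids all original vertices of V(G). -/

import Mathlib

open Finset

/-- Vertices of the reduction graph `G'`: original vertices `v` of `G`, heavy pendant
vertices `v̂`, gadget vertices `(e, c)` with `c = 0,1,2,3` standing for `U(e),D(e),L(e),R(e)`,
and the two endpoints `s` (code `0`) and `t` (code `1`). -/
abbrev V16 (n m : ℕ) := (Fin n ⊕ Fin n) ⊕ ((Fin m × Fin 4) ⊕ Fin 2)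

/-- Original vertex `vᵢ`. -/
def orig {n m : ℕ} (i : Fin n) : V16 n m := Sum.inl (Sum.inl i)
/-- Heavy pendant vertex `v̂ᵢ`. -/
def hat {n m : ℕ} (i : Fin n) : V16 n m := Sum.inl (Sum.inr i)
/-- Gadget vertex: `gad j 0 = U(eⱼ)`, `gad j 1 = D(eⱼ)`, `gad j 2 = L(eⱼ)`, `gad j 3 = R(eⱼ)`. -/
def gad {n m : ℕ} (j : Fin m) (c : Fin 4) : V16 n m := Sum.inr (Sum.inl (j, c))
/-- The source `s`. -/
def s16 {n m : ℕ} : V16 n m := Sum.inr (Sum.inr 0)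
/-- The target `t`. -/
def t16 {n m : ℕ} : V16 n m := Sum.inr (Sum.inr 1)

/-- Adjacency (one orientation suffices; it is symmetrized by `fromRel`):
pendant edges `vᵢ–v̂ᵢ`; gadget edges `u–L(e)`, `R(e)–v`, `L(e)–U(e)`, `L(e)–D(e)`,
`U(e)–R(e)`, `D(e)–R(e)`; chain edges `D(eⱼ)–U(e_{j+1})`; and `s–U(e₁)`, `D(e_m)–t`. -/
def adj16 (n m : ℕ) (edges : Fin m → Fin n × Fin n) : V16 n m → V16 n m → Bool
  | Sum.inl (Sum.inl i), Sum.inl (Sum.inr i') => i == i'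
  | Sum.inl (Sum.inl i), Sum.inr (Sum.inl (j, c)) =>
      (c == 2 && (edges j).1 == i) || (c == 3 && (edges j).2 == i)
  | Sum.inr (Sum.inl (j, c)), Sum.inr (Sum.inl (j', c')) =>
      (j == j' && ((c == 2 && (c' == 0 || c' == 1)) || (c == 0 && c' == 3) ||
        (c == 1 && c' == 3))) ||
      (j'.val == j.val + 1 && c == 1 && c' == 0)
  | Sum.inr (Sum.inr x), Sum.inr (Sum.inl (j, c)) =>
      (x == 0 && j.val == 0 && c == 0) || (x == 1 && j.val + 1 == m && c == 1)
  | _, _ => false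

/-- The reduction graph `G'`. -/
def G16 (n m : ℕ) (edges : Fin m → Fin n × Fin n) : SimpleGraph (V16 n m) :=
  SimpleGraph.fromRel (fun a b => adj16 n m edges a b = true)

instance (n m : ℕ) (edges : Fin m → Fin n × Fin n) : DecidableRel (G16 n m edges).Adj :=
  fun a b => decidable_of_iff _ (SimpleGraph.fromRel_adj _ a b).symm

/-- Node weights: heavy pendant vertices get weight `|V| + 4|E|`, all others weight `1`. -/
def W16 (n m : ℕ) : V16 n m → ℕ
  | Sum.inl (Sum.inr _) => n + 4 * m
  | _ => 1

/-- The closed neighborhood of a finite set of vertices. -/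
def nbhd {V : Type*} [Fintype V] [DecidableEq V] (G : SimpleGraph V) [DecidableRel G.Adj]
    (S : Finset V) : Finset V :=
  S ∪ univ.filter (fun v => ∃ u ∈ S, G.Adj u v)

/-- The weighted exposure cost of a walk: the total weight of the closed neighborhood
of its vertex set. -/
def wcost16 {n m : ℕ} (edges : Fin m → Fin n × Fin n) {a b : V16 n m}
    (p : (G16 n m edges).Walk a b) : ℕ :=
  ∑ u ∈ nbhd (G16 n m edges) p.support.toFinset, W16 n m u


section Aux
variable {n m : ℕ} {edges : Fin m → Fin n × Fin n}

lemma adjUR (k : ℕ) (hk : k < m) :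
    (G16 n m edges).Adj (gad ⟨k, hk⟩ 0) (gad ⟨k, hk⟩ 3) := by
  rw [G16, SimpleGraph.fromRel_adj]
  exact ⟨by simp [gad], Or.inl (by simp [adj16, gad])⟩

lemma adjRD (k : ℕ) (hk : k < m) :
    (G16 n m edges).Adj (gad ⟨k, hk⟩ 3) (gad ⟨k, hk⟩ 1) := by
  rw [G16, SimpleGraph.fromRel_adj]
  exact ⟨by simp [gad], Or.inr (by simp [adj16, gad])⟩

lemma adjDU (k : ℕ) (hk : k < m) (hk1 : k + 1 < m) :
    (G16 n m edges).Adj (gad ⟨k, hk⟩ 1) (gad ⟨k + 1, hk1⟩ 0) := by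
  rw [G16, SimpleGraph.fromRel_adj]
  exact ⟨by simp [gad], Or.inl (by simp [adj16, gad])⟩

lemma adjsU (h0 : 0 < m) :
    (G16 n m edges).Adj s16 (gad ⟨0, h0⟩ 0) := by
  rw [G16, SimpleGraph.fromRel_adj]
  exact ⟨by simp [gad, s16], Or.inl (by simp [adj16, gad, s16])⟩

lemma adjDt (k : ℕ) (hk : k < m) (hk1 : k + 1 = m) :
    (G16 n m edges).Adj (gad ⟨k, hk⟩ 1) t16 := by
  rw [G16, SimpleGraph.fromRel_adj]
  exact ⟨by simp [gad, t16], Or.inr (by simp [adj16, gad, t16, hk1])⟩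

lemma adj_to_hat (u : V16 n m) (i : Fin n)
    (h : (G16 n m edges).Adj u (hat i)) : u = orig i := by
  rw [G16, SimpleGraph.fromRel_adj] at h
  obtain ⟨-, h | h⟩ := h
  · rcases u with (a | a) | (⟨j, c⟩ | x) <;> simp [adj16, hat, orig] at h ⊢
    exact h
  · rcases u with (a | a) | (⟨j, c⟩ | x) <;> simp [adj16, hat] at h

lemma orig_adj_hat (i : Fin n) : (G16 n m edges).Adj (orig i) (hat i) := by
  rw [G16, SimpleGraph.fromRel_adj]
  exact ⟨by simp [orig, hat], Or.inl (by simp [adj16, orig, hat])⟩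

end Aux

open SimpleGraph in
def tourFrom (n m : ℕ) (edges : Fin m → Fin n × Fin n) (k : ℕ) (hk : k < m) :
    (G16 n m edges).Walk (gad ⟨k, hk⟩ 0) t16 :=
  Walk.cons (adjUR k hk) <| Walk.cons (adjRD k hk) <|
    if h : k + 1 < m then
      Walk.cons (adjDU k hk h) (tourFrom n m edges (k + 1) h)
    else
      Walk.cons (adjDt k hk (by omega)) Walk.nil
termination_by m - k

lemma tourFrom_support (n m : ℕ) (edges : Fin m → Fin n × Fin n) (k : ℕ) (hk : k < m) :
    ∀ x ∈ (tourFrom n m edges k hk).support,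
      x = t16 ∨ ∃ (j : Fin m) (c : Fin 4), k ≤ j.val ∧ x = gad j c := by
  rw [tourFrom]
  split_ifs with h
  · intro x hx
    simp only [SimpleGraph.Walk.support_cons, List.mem_cons] at hx
    rcases hx with rfl | rfl | rfl | hx
    · exact Or.inr ⟨⟨k, hk⟩, 0, le_refl _, rfl⟩
    · exact Or.inr ⟨⟨k, hk⟩, 3, le_refl _, rfl⟩
    · exact Or.inr ⟨⟨k, hk⟩, 1, le_refl _, rfl⟩
    · rcases tourFrom_support n m edges (k + 1) h x hx with h1 | ⟨j, c, hj, rfl⟩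
      · exact Or.inl h1
      · exact Or.inr ⟨j, c, by omega, rfl⟩
  · intro x hx
    simp only [SimpleGraph.Walk.support_cons, SimpleGraph.Walk.support_nil,
      List.mem_cons, List.mem_singleton] at hx
    rcases hx with rfl | rfl | rfl | (rfl | hx)
    · exact Or.inr ⟨⟨k, hk⟩, 0, le_refl _, rfl⟩
    · exact Or.inr ⟨⟨k, hk⟩, 3, le_refl _, rfl⟩
    · exact Or.inr ⟨⟨k, hk⟩, 1, le_refl _, rfl⟩
    · exact Or.inl rfl
    · simp at hx
termination_by m - k

lemma tourFrom_isPath (n m : ℕ) (edges : Fin m → Fin n × Fin n) (k : ℕ) (hk : k < m) :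
    (tourFrom n m edges k hk).IsPath := by
  rw [tourFrom]
  split_ifs with h
  · refine SimpleGraph.Walk.IsPath.cons (SimpleGraph.Walk.IsPath.cons
      (SimpleGraph.Walk.IsPath.cons (tourFrom_isPath n m edges (k + 1) h) ?_) ?_) ?_
    · intro hmem
      rcases tourFrom_support n m edges (k + 1) h _ hmem with h1 | ⟨j, c, hj, he⟩
      · simp [gad, t16] at h1
      · simp only [gad, Sum.inr.injEq, Sum.inl.injEq, Prod.mk.injEq] at he
        have : j.val = k := by rw [← he.1]
        omega
    · intro hmem
      simp only [SimpleGraph.Walk.support_cons, List.mem_cons] at hmem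
      rcases hmem with he | hmem
      · simp [gad] at he
      · rcases tourFrom_support n m edges (k + 1) h _ hmem with h1 | ⟨j, c, hj, he⟩
        · simp [gad, t16] at h1
        · simp only [gad, Sum.inr.injEq, Sum.inl.injEq, Prod.mk.injEq] at he
          have : j.val = k := by rw [← he.1]
          omega
    · intro hmem
      simp only [SimpleGraph.Walk.support_cons, List.mem_cons] at hmem
      rcases hmem with he | he | hmem
      · simp [gad] at he
      · simp [gad] at he
      · rcases tourFrom_support n m edges (k + 1) h _ hmem with h1 | ⟨j, c, hj, he⟩
        · simp [gad, t16] at h1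
        · simp only [gad, Sum.inr.injEq, Sum.inl.injEq, Prod.mk.injEq] at he
          have : j.val = k := by rw [← he.1]
          omega
  · rw [SimpleGraph.Walk.isPath_def]
    simp only [SimpleGraph.Walk.support_cons, SimpleGraph.Walk.support_nil]
    simp [gad, t16]
termination_by m - k

section Main
variable {n m : ℕ} {edges : Fin m → Fin n × Fin n}

/-- The pure-gadget tour path `s – U(e₁) – R(e₁) – D(e₁) – U(e₂) – ⋯ – D(eₘ) – t`. -/
def tour (n m : ℕ) (edges : Fin m → Fin n × Fin n) (hm : 1 ≤ m) :
    (G16 n m edges).Walk s16 t16 :=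
  SimpleGraph.Walk.cons (adjsU hm) (tourFrom n m edges 0 hm)

lemma tour_support (hm : 1 ≤ m) :
    ∀ x ∈ (tour n m edges hm).support,
      x = s16 ∨ x = t16 ∨ ∃ (j : Fin m) (c : Fin 4), x = gad j c := by
  intro x hx
  simp only [tour, SimpleGraph.Walk.support_cons, List.mem_cons] at hx
  rcases hx with rfl | hx
  · exact Or.inl rfl
  · rcases tourFrom_support n m edges 0 hm x hx with h1 | ⟨j, c, _, rfl⟩
    · exact Or.inr (Or.inl h1)
    · exact Or.inr (Or.inr ⟨j, c, rfl⟩)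

lemma tour_isPath (hm : 1 ≤ m) : (tour n m edges hm).IsPath := by
  refine SimpleGraph.Walk.IsPath.cons (tourFrom_isPath n m edges 0 hm) ?_
  intro hmem
  rcases tourFrom_support n m edges 0 hm _ hmem with h1 | ⟨j, c, _, he⟩
  · simp [s16, t16] at h1
  · simp [s16, gad] at he

lemma tour_cost (hm : 1 ≤ m) : wcost16 edges (tour n m edges hm) ≤ n + 4 * m + 2 := by
  classical
  set A : Finset (V16 n m) :=
    ((univ : Finset (Fin n)).image orig ∪
      (univ : Finset (Fin m × Fin 4)).image (fun p => gad p.1 p.2)) ∪ {s16, t16} with hA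
  have hsub : nbhd (G16 n m edges) (tour n m edges hm).support.toFinset ⊆ A := by
    intro x hx
    have hxgood : ∀ i : Fin n, x ≠ hat i := by
      intro i hxi
      subst hxi
      rcases Finset.mem_union.mp hx with hx | hx
      · rcases tour_support hm _ (List.mem_toFinset.mp hx) with h | h | ⟨j, c, h⟩ <;>
          simp [hat, s16, t16, gad] at h
      · obtain ⟨u, hu, hadj⟩ := (Finset.mem_filter.mp hx).2
        have := adj_to_hat u i hadj
        subst this
        rcases tour_support hm _ (List.mem_toFinset.mp hu) with h | h | ⟨j, c, h⟩ <;>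
          simp [orig, s16, t16, gad] at h
    rcases x with (a | a) | (⟨j, c⟩ | v)
    · exact Finset.mem_union.mpr (Or.inl (Finset.mem_union.mpr (Or.inl
        (Finset.mem_image.mpr ⟨a, Finset.mem_univ _, rfl⟩))))
    · exact absurd rfl (hxgood a)
    · exact Finset.mem_union.mpr (Or.inl (Finset.mem_union.mpr (Or.inr
        (Finset.mem_image.mpr ⟨(j, c), Finset.mem_univ _, rfl⟩))))
    · fin_cases v
      · exact Finset.mem_union.mpr (Or.inr (by simp [s16]))
      · exact Finset.mem_union.mpr (Or.inr (by simp [t16]))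
  calc wcost16 edges (tour n m edges hm)
      ≤ ∑ u ∈ A, W16 n m u := Finset.sum_le_sum_of_subset hsub
    _ = (∑ u ∈ (univ : Finset (Fin n)).image orig, W16 n m u +
          ∑ u ∈ (univ : Finset (Fin m × Fin 4)).image (fun p => gad p.1 p.2), W16 n m u) +
          ∑ u ∈ ({s16, t16} : Finset (V16 n m)), W16 n m u := by
        rw [hA, Finset.sum_union, Finset.sum_union]
        · rw [Finset.disjoint_left]
          rintro x hx hy
          obtain ⟨a, -, rfl⟩ := Finset.mem_image.mp hx
          obtain ⟨b, -, hb⟩ := Finset.mem_image.mp hy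
          simp [orig, gad] at hb
        · rw [Finset.disjoint_left]
          rintro x hx hy
          simp only [Finset.mem_insert, Finset.mem_singleton] at hy
          rcases Finset.mem_union.mp hx with hx | hx
          · obtain ⟨a, -, rfl⟩ := Finset.mem_image.mp hx
            rcases hy with h | h <;> simp [orig, s16, t16] at h
          · obtain ⟨b, -, rfl⟩ := Finset.mem_image.mp hx
            rcases hy with h | h <;> simp [gad, s16, t16] at h
    _ ≤ n + 4 * m + 2 := by
        have h1 : ∑ u ∈ (univ : Finset (Fin n)).image orig, W16 n m u = n := by
          rw [Finset.sum_image (by intro a _ b _ h; simpa [orig] using h)]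
          simp [W16, orig]
        have h2 : ∑ u ∈ (univ : Finset (Fin m × Fin 4)).image
            (fun p => gad p.1 p.2), W16 n m u = 4 * m := by
          rw [Finset.sum_image (by intro a _ b _ h; simpa [gad, Prod.ext_iff] using h)]
          have : ∀ p : Fin m × Fin 4, W16 n m (gad p.1 p.2) = 1 := fun p => rfl
          simp only [this, Finset.sum_const, smul_eq_mul, mul_one]
          simp [Finset.card_univ]
          ring
        have h3 : ∑ u ∈ ({s16, t16} : Finset (V16 n m)), W16 n m u = 2 := by
          rw [Finset.sum_pair (by simp [s16, t16])]
          rfl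
        omega

end Main

/-- In the vertex-cover reduction graph `G'` built from a simple graph `G` of maximum
degree 3, every weighted-optimal `s–t` secluded path avoids all original vertices of `G`. -/
theorem optimal_path_avoids_originals (n m : ℕ) (hm : 1 ≤ m)
    (edges : Fin m → Fin n × Fin n)
    (hsimple : ∀ j, (edges j).1 ≠ (edges j).2)
    (hdeg3 : ∀ i : Fin n,
      (univ.filter (fun j => (edges j).1 = i ∨ (edges j).2 = i)).card ≤ 3)
    (p : (G16 n m edges).Walk s16 t16) (hp : p.IsPath)
    (hopt : ∀ q : (G16 n m edges).Walk s16 t16, q.IsPath →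
      wcost16 edges p ≤ wcost16 edges q) :
    ∀ i : Fin n, orig i ∉ p.support := by
  intro i hi
  -- lower bound on wcost16 edges p
  have hS : orig i ∈ p.support.toFinset := List.mem_toFinset.mpr hi
  have hsS : s16 ∈ p.support.toFinset := List.mem_toFinset.mpr p.start_mem_support
  have htS : t16 ∈ p.support.toFinset := List.mem_toFinset.mpr p.end_mem_support
  have hhat : hat i ∈ nbhd (G16 n m edges) p.support.toFinset := by
    refine Finset.mem_union.mpr (Or.inr (Finset.mem_filter.mpr ⟨Finset.mem_univ _,
      ⟨orig i, hS, orig_adj_hat i⟩⟩))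
  have hsub : ({hat i, orig i, s16, t16} : Finset (V16 n m)) ⊆
      nbhd (G16 n m edges) p.support.toFinset := by
    intro x hx
    simp only [Finset.mem_insert, Finset.mem_singleton] at hx
    rcases hx with rfl | rfl | rfl | rfl
    · exact hhat
    · exact Finset.mem_union.mpr (Or.inl hS)
    · exact Finset.mem_union.mpr (Or.inl hsS)
    · exact Finset.mem_union.mpr (Or.inl htS)
  have hsum : ∑ u ∈ ({hat i, orig i, s16, t16} : Finset (V16 n m)), W16 n m u
      = n + 4 * m + 3 := by
    rw [Finset.sum_insert (by simp [hat, orig, s16, t16]),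
      Finset.sum_insert (by simp [orig, s16, t16]),
      Finset.sum_insert (by simp [s16, t16]),
      Finset.sum_singleton]
    show (n + 4 * m) + (1 + (1 + 1)) = n + 4 * m + 3
    omega
  have hlow : n + 4 * m + 3 ≤ wcost16 edges p := by
    rw [← hsum]
    exact Finset.sum_le_sum_of_subset hsub
  have := hopt (tour n m edges hm) (tour_isPath hm)
  have := tour_cost (edges := edges) hm
  omega
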